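/- Let C₀₁, C₀, C₁ be categories and κ_i : C₀₁ → C_i (i = 0, 1) fully faithful functors admitting right adjoints ∂_i : C_i → C₀₁. Then the canonical functor ι from the pushout C₀ ⊔_{C₀₁} C₁ (of the κ_i) to the pullback C₀ ×_{C₀₁} C₁ (of the ∂_i), induced by (id, κ₁∂₀) on C₀ and (κ₀∂₁, id) on C₁, is fully faithful. -/

import Mathlib

open CategoryTheory

universe u

variable {C01 C0 C1 : Type u} [SmallCategory C01] [SmallCategory C0] [SmallCategory C1]

/-- The pseudo-pullback (iso-comma category) `C₀ ×_{C₀₁} C₁` of two functors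
`r₀ : C₀ → C₀₁` and `r₁ : C₁ → C₀₁`: objects are pairs `(d₀, d₁)` together with an
isomorphism `r₀(d₀) ≅ r₁(d₁)`. -/
structure PsPullback (r₀ : C0 ⥤ C01) (r₁ : C1 ⥤ C01) : Type u where
  left : C0
  right : C1
  iso : r₀.obj left ≅ r₁.obj right

namespace PsPullback

variable {r₀ : C0 ⥤ C01} {r₁ : C1 ⥤ C01}

instance : Category (PsPullback r₀ r₁) where
  Hom x y := {p : (x.left ⟶ y.left) × (x.right ⟶ y.right) //
    r₀.map p.1 ≫ y.iso.hom = x.iso.hom ≫ r₁.map p.2}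
  id x := ⟨⟨𝟙 _, 𝟙 _⟩, by simp⟩
  comp {x y z} f g := ⟨⟨f.1.1 ≫ g.1.1, f.1.2 ≫ g.1.2⟩, by
    rw [Functor.map_comp, Functor.map_comp, Category.assoc, g.2, ← Category.assoc, f.2,
      Category.assoc]⟩
  id_comp f := Subtype.ext (Prod.ext (by simp) (by simp))
  comp_id f := Subtype.ext (Prod.ext (by simp) (by simp))
  assoc f g h := Subtype.ext (Prod.ext (by simp) (by simp))

end PsPullback

/-- The canonical functor `C₀ → C₀ ×_{C₀₁} C₁` given on objects by `d₀ ↦ (d₀, κ₁ r₀ d₀)`,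
using the unit isomorphism of the adjunction `κ₁ ⊣ r₁` (an iso since `κ₁` is fully
faithful). -/
noncomputable def iotaLeft (r₀ : C0 ⥤ C01) {κ₁ : C01 ⥤ C1} {r₁ : C1 ⥤ C01}
    (adj₁ : κ₁ ⊣ r₁) [κ₁.Full] [κ₁.Faithful] : C0 ⥤ PsPullback r₀ r₁ where
  obj d := ⟨d, κ₁.obj (r₀.obj d), asIso (adj₁.unit.app (r₀.obj d))⟩
  map {d d'} f := ⟨⟨f, κ₁.map (r₀.map f)⟩, by
    simpa using (adj₁.unit.naturality (r₀.map f))⟩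
  map_id d := by
    apply Subtype.ext
    show (_, _) = (_, _)
    simp
  map_comp f g := by
    apply Subtype.ext
    show (_, _) = (_, _)
    simp

/-- The canonical functor `C₁ → C₀ ×_{C₀₁} C₁` given on objects by `d₁ ↦ (κ₀ r₁ d₁, d₁)`,
using the inverse of the unit isomorphism of the adjunction `κ₀ ⊣ r₀`. -/
noncomputable def iotaRight {κ₀ : C01 ⥤ C0} {r₀ : C0 ⥤ C01} (adj₀ : κ₀ ⊣ r₀)
    [κ₀.Full] [κ₀.Faithful] (r₁ : C1 ⥤ C01) : C1 ⥤ PsPullback r₀ r₁ where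
  obj d := ⟨κ₀.obj (r₁.obj d), d, (asIso (adj₀.unit.app (r₁.obj d))).symm⟩
  map {d d'} f := ⟨⟨κ₀.map (r₁.map f), f⟩, by
    have h := adj₀.unit.naturality (r₁.map f)
    dsimp at h ⊢
    rw [IsIso.comp_inv_eq, Category.assoc, h, IsIso.inv_hom_id_assoc]⟩
  map_id d := by
    apply Subtype.ext
    show (_, _) = (_, _)
    simp
  map_comp f g := by
    apply Subtype.ext
    show (_, _) = (_, _)
    simp

/-! ### Auxiliary machinery for the proof -/

set_option maxHeartbeats 1000000 in
/-- dummy -/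
example : True := trivial

namespace GluAux

section PBAPI

variable {C01 C0 C1 : Type u} [SmallCategory C01] [SmallCategory C0] [SmallCategory C1]
variable {r₀ : C0 ⥤ C01} {r₁ : C1 ⥤ C01}

theorem pb_hom_ext {x y : PsPullback r₀ r₁} {f g : x ⟶ y} (h1 : f.val.1 = g.val.1)
    (h2 : f.val.2 = g.val.2) : f = g :=
  Subtype.ext (Prod.ext h1 h2)

@[simp] theorem pb_comp_fst {x y z : PsPullback r₀ r₁} (f : x ⟶ y) (g : y ⟶ z) :
    (f ≫ g).val.1 = f.val.1 ≫ g.val.1 := rfl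

@[simp] theorem pb_comp_snd {x y z : PsPullback r₀ r₁} (f : x ⟶ y) (g : y ⟶ z) :
    (f ≫ g).val.2 = f.val.2 ≫ g.val.2 := rfl

@[simp] theorem pb_id_fst (x : PsPullback r₀ r₁) : (𝟙 x : x ⟶ x).val.1 = 𝟙 x.left := rfl

@[simp] theorem pb_id_snd (x : PsPullback r₀ r₁) : (𝟙 x : x ⟶ x).val.2 = 𝟙 x.right := rfl

theorem pb_compat {x y : PsPullback r₀ r₁} (f : x ⟶ y) :
    r₀.map f.val.1 ≫ y.iso.hom = x.iso.hom ≫ r₁.map f.val.2 := f.2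

/-- first component of an isomorphism in the pseudo-pullback -/
def isoFst {x y : PsPullback r₀ r₁} (e : x ≅ y) : x.left ≅ y.left where
  hom := e.hom.val.1
  inv := e.inv.val.1
  hom_inv_id := by rw [← pb_comp_fst, e.hom_inv_id, pb_id_fst]
  inv_hom_id := by rw [← pb_comp_fst, e.inv_hom_id, pb_id_fst]

/-- second component of an isomorphism in the pseudo-pullback -/
def isoSnd {x y : PsPullback r₀ r₁} (e : x ≅ y) : x.right ≅ y.right where
  hom := e.hom.val.2
  inv := e.inv.val.2
  hom_inv_id := by rw [← pb_comp_snd, e.hom_inv_id, pb_id_snd]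
  inv_hom_id := by rw [← pb_comp_snd, e.inv_hom_id, pb_id_snd]

end PBAPI

section AdjHelp

variable {C01 C1 : Type u} [SmallCategory C01] [SmallCategory C1]
variable {κ : C01 ⥤ C1} {r : C1 ⥤ C01}

/-- maps out of the image of a left adjoint are determined by their image under the
right adjoint -/
theorem post_map_inj (adj : κ ⊣ r) {c : C01} {X : C1} {u v : κ.obj c ⟶ X}
    (h : r.map u = r.map v) : u = v := by
  apply (adj.homEquiv c X).injective
  rw [Adjunction.homEquiv_unit, Adjunction.homEquiv_unit, h]

theorem r_map_counit_eq_inv (adj : κ ⊣ r) [κ.Full] [κ.Faithful] (b : C1) :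
    r.map (adj.counit.app b) = inv (adj.unit.app (r.obj b)) := by
  apply IsIso.eq_inv_of_hom_inv_id
  exact adj.right_triangle_components b

theorem isIso_r_map_counit (adj : κ ⊣ r) [κ.Full] [κ.Faithful] (b : C1) :
    IsIso (r.map (adj.counit.app b)) := by
  rw [r_map_counit_eq_inv adj b]
  infer_instance

end AdjHelp

section IotaAPI

variable {C01 C0 C1 : Type u} [SmallCategory C01] [SmallCategory C0] [SmallCategory C1]
variable {κ₀ : C01 ⥤ C0} {κ₁ : C01 ⥤ C1}
variable [κ₀.Full] [κ₀.Faithful] [κ₁.Full] [κ₁.Faithful]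
variable {r₀ : C0 ⥤ C01} {r₁ : C1 ⥤ C01} (adj₀ : κ₀ ⊣ r₀) (adj₁ : κ₁ ⊣ r₁)

@[simp] theorem iotaLeft_map_fst {a a' : C0} (f : a ⟶ a') :
    ((iotaLeft r₀ adj₁).map f).val.1 = f := rfl

@[simp] theorem iotaLeft_map_snd {a a' : C0} (f : a ⟶ a') :
    ((iotaLeft r₀ adj₁).map f).val.2 = κ₁.map (r₀.map f) := rfl

@[simp] theorem iotaRight_map_fst {b b' : C1} (f : b ⟶ b') :
    ((iotaRight adj₀ r₁).map f).val.1 = κ₀.map (r₁.map f) := rfl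

@[simp] theorem iotaRight_map_snd {b b' : C1} (f : b ⟶ b') :
    ((iotaRight adj₀ r₁).map f).val.2 = f := rfl

/-- morphisms out of an object of the form `iotaLeft a` are determined by their first
component -/
theorem fromLeft_ext {a : C0} {P : PsPullback r₀ r₁}
    {f g : (iotaLeft r₀ adj₁).obj a ⟶ P} (h : f.val.1 = g.val.1) : f = g := by
  have hf := pb_compat f
  have hg := pb_compat g
  rw [h] at hf
  have hr : r₁.map f.val.2 = r₁.map g.val.2 := by
    have h2 := hf.symm.trans hg
    exact (cancel_epi (((iotaLeft r₀ adj₁).obj a).iso.hom)).mp h2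
  exact pb_hom_ext h (post_map_inj adj₁ hr)

/-- morphisms out of an object of the form `iotaRight b` are determined by their second
component -/
theorem fromRight_ext {b : C1} {P : PsPullback r₀ r₁}
    {f g : (iotaRight adj₀ r₁).obj b ⟶ P} (h : f.val.2 = g.val.2) : f = g := by
  have hf := pb_compat f
  have hg := pb_compat g
  rw [h] at hf
  have hr : r₀.map f.val.1 = r₀.map g.val.1 := by
    have h2 := hf.trans hg.symm
    exact (cancel_mono (P.iso.hom)).mp h2
  exact pb_hom_ext (post_map_inj adj₀ hr) h

end IotaAPI

end GluAux
namespace GluAux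

section Canon

variable {C01 C0 C1 : Type u} [SmallCategory C01] [SmallCategory C0] [SmallCategory C1]
variable {Q : Type u} [SmallCategory Q]
variable {κ₀ : C01 ⥤ C0} {κ₁ : C01 ⥤ C1}
variable {r₀ : C0 ⥤ C01} {r₁ : C1 ⥤ C01}
variable {j₀ : C0 ⥤ Q} {j₁ : C1 ⥤ Q}

/-- the object equality coming from commutativity of the square -/
theorem obEq (w : κ₀ ⋙ j₀ = κ₁ ⋙ j₁) (c : C01) :
    j₀.obj (κ₀.obj c) = j₁.obj (κ₁.obj c) :=
  Functor.congr_obj w c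

theorem θ_nat (w : κ₀ ⋙ j₀ = κ₁ ⋙ j₁) {c c' : C01} (u : c ⟶ c') :
    j₀.map (κ₀.map u) ≫ eqToHom (obEq w c') = eqToHom (obEq w c) ≫ j₁.map (κ₁.map u) := by
  have h := Functor.congr_hom w u
  simp only [Functor.comp_map] at h
  rw [h]
  simp [obEq]

theorem θ_nat' (w : κ₀ ⋙ j₀ = κ₁ ⋙ j₁) {c c' : C01} (u : c ⟶ c') :
    eqToHom (obEq w c).symm ≫ j₀.map (κ₀.map u) = j₁.map (κ₁.map u) ≫ eqToHom (obEq w c').symm := by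
  have h := Functor.congr_hom w u
  simp only [Functor.comp_map] at h
  rw [h]
  simp [obEq]

/-- the canonical "left-to-right" morphisms in `Q` -/
def ψLR (adj₁ : κ₁ ⊣ r₁) (w : κ₀ ⋙ j₀ = κ₁ ⋙ j₁) (a : C0) (b : C1)
    (f : a ⟶ κ₀.obj (r₁.obj b)) : j₀.obj a ⟶ j₁.obj b :=
  j₀.map f ≫ eqToHom (obEq w (r₁.obj b)) ≫ j₁.map (adj₁.counit.app b)

/-- the canonical "right-to-left" morphisms in `Q` -/
def ψRL (adj₀ : κ₀ ⊣ r₀) (w : κ₀ ⋙ j₀ = κ₁ ⋙ j₁) (b : C1) (a : C0)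
    (p : b ⟶ κ₁.obj (r₀.obj a)) : j₁.obj b ⟶ j₀.obj a :=
  j₁.map p ≫ eqToHom (obEq w (r₀.obj a)).symm ≫ j₀.map (adj₀.counit.app a)

section Red

variable (adj₀ : κ₀ ⊣ r₀) (adj₁ : κ₁ ⊣ r₁) (w : κ₀ ⋙ j₀ = κ₁ ⋙ j₁)

theorem redLLR {a a' : C0} {b : C1} (f : a ⟶ a') (f' : a' ⟶ κ₀.obj (r₁.obj b)) :
    j₀.map f ≫ ψLR adj₁ w a' b f' = ψLR adj₁ w a b (f ≫ f') := by
  simp [ψLR]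

theorem redRRL {b b' : C1} {a : C0} (g : b ⟶ b') (p : b' ⟶ κ₁.obj (r₀.obj a)) :
    j₁.map g ≫ ψRL adj₀ w b' a p = ψRL adj₀ w b a (g ≫ p) := by
  simp [ψRL]

theorem redLRR {a : C0} {b b' : C1} (f : a ⟶ κ₀.obj (r₁.obj b)) (g : b ⟶ b') :
    ψLR adj₁ w a b f ≫ j₁.map g = ψLR adj₁ w a b' (f ≫ κ₀.map (r₁.map g)) := by
  unfold ψLR
  have hε := adj₁.counit.naturality g
  simp only [Functor.id_map, Functor.comp_map] at hε
  rw [Category.assoc, Category.assoc, ← j₁.map_comp, ← hε, j₁.map_comp,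
    ← Category.assoc (eqToHom _), ← θ_nat w (r₁.map g)]
  simp

theorem redRLL {b : C1} {a a' : C0} (p : b ⟶ κ₁.obj (r₀.obj a)) (f : a ⟶ a') :
    ψRL adj₀ w b a p ≫ j₀.map f = ψRL adj₀ w b a' (p ≫ κ₁.map (r₀.map f)) := by
  unfold ψRL
  have hε := adj₀.counit.naturality f
  simp only [Functor.id_map, Functor.comp_map] at hε
  rw [Category.assoc, Category.assoc, ← j₀.map_comp, ← hε, j₀.map_comp,
    ← Category.assoc (eqToHom _), θ_nat' w (r₀.map f)]
  simp

theorem redLRRL [κ₁.Full] {a : C0} {b : C1} {a' : C0}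
    (f : a ⟶ κ₀.obj (r₁.obj b)) (p : b ⟶ κ₁.obj (r₀.obj a')) :
    ψLR adj₁ w a b f ≫ ψRL adj₀ w b a' p =
      j₀.map (f ≫ κ₀.map (κ₁.preimage (adj₁.counit.app b ≫ p)) ≫ adj₀.counit.app a') := by
  unfold ψLR ψRL
  have hpre : adj₁.counit.app b ≫ p = κ₁.map (κ₁.preimage (adj₁.counit.app b ≫ p)) :=
    (κ₁.map_preimage _).symm
  rw [Category.assoc, Category.assoc, ← Category.assoc (j₁.map (adj₁.counit.app b)),
    ← j₁.map_comp, hpre, ← Category.assoc (eqToHom _), ← θ_nat w]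
  simp

theorem redRLLR [κ₀.Full] {b : C1} {a : C0} {b' : C1}
    (p : b ⟶ κ₁.obj (r₀.obj a)) (f : a ⟶ κ₀.obj (r₁.obj b')) :
    ψRL adj₀ w b a p ≫ ψLR adj₁ w a b' f =
      j₁.map (p ≫ κ₁.map (κ₀.preimage (adj₀.counit.app a ≫ f)) ≫ adj₁.counit.app b') := by
  unfold ψLR ψRL
  have hpre : adj₀.counit.app a ≫ f = κ₀.map (κ₀.preimage (adj₀.counit.app a ≫ f)) :=
    (κ₀.map_preimage _).symm
  rw [Category.assoc, Category.assoc, ← Category.assoc (j₀.map (adj₀.counit.app a)),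
    ← j₀.map_comp, hpre, ← Category.assoc (eqToHom _), θ_nat' w]
  simp

end Red

/-- objects of the two pieces, mapped to `Q` -/
def SrcObj (j₀ : C0 ⥤ Q) (j₁ : C1 ⥤ Q) : C0 ⊕ C1 → Q :=
  Sum.elim j₀.obj j₁.obj

/-- the property of being one of the four canonical forms of morphisms of `Q` -/
def CanForm (adj₀ : κ₀ ⊣ r₀) (adj₁ : κ₁ ⊣ r₁) (w : κ₀ ⋙ j₀ = κ₁ ⋙ j₁) :
    ∀ (s t : C0 ⊕ C1), (SrcObj j₀ j₁ s ⟶ SrcObj j₀ j₁ t) → Prop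
  | Sum.inl a, Sum.inl a', χ => ∃ f : a ⟶ a', χ = j₀.map f
  | Sum.inl a, Sum.inr b, χ => ∃ f : a ⟶ κ₀.obj (r₁.obj b), χ = ψLR adj₁ w a b f
  | Sum.inr b, Sum.inl a, χ => ∃ p : b ⟶ κ₁.obj (r₀.obj a), χ = ψRL adj₀ w b a p
  | Sum.inr b, Sum.inr b', χ => ∃ g : b ⟶ b', χ = j₁.map g

theorem canComp [κ₀.Full] [κ₁.Full] (adj₀ : κ₀ ⊣ r₀) (adj₁ : κ₁ ⊣ r₁)
    (w : κ₀ ⋙ j₀ = κ₁ ⋙ j₁) {s t u : C0 ⊕ C1}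
    {χ : SrcObj j₀ j₁ s ⟶ SrcObj j₀ j₁ t} {χ' : SrcObj j₀ j₁ t ⟶ SrcObj j₀ j₁ u}
    (h : CanForm adj₀ adj₁ w s t χ) (h' : CanForm adj₀ adj₁ w t u χ') :
    CanForm adj₀ adj₁ w s u (χ ≫ χ') := by
  rcases s with a | b <;> rcases t with a1 | b1 <;> rcases u with a2 | b2 <;>
    obtain ⟨f, rfl⟩ := h <;> obtain ⟨g, rfl⟩ := h'
  · exact ⟨f ≫ g, by rw [Functor.map_comp]; rfl⟩
  · exact ⟨f ≫ g, redLLR adj₁ w f g⟩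
  · exact ⟨_, redLRRL adj₀ adj₁ w f g⟩
  · exact ⟨_, redLRR adj₁ w f g⟩
  · exact ⟨_, redRLL adj₀ w f g⟩
  · exact ⟨_, redRLLR adj₀ adj₁ w f g⟩
  · exact ⟨f ≫ g, redRRL adj₀ w f g⟩
  · exact ⟨f ≫ g, by rw [Functor.map_comp]; rfl⟩

end Canon

end GluAux
namespace GluAux

/-- codiscrete category on a type -/
def Codisc (X : Type u) : Type u := X

instance (X : Type u) : SmallCategory (Codisc X) where
  Hom _ _ := PUnit
  id _ := PUnit.unit
  comp _ _ := PUnit.unit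

instance {X : Type u} (x y : Codisc X) : Subsingleton (x ⟶ y) :=
  inferInstanceAs (Subsingleton PUnit)

section Zig

variable {C01 C0 C1 : Type u} [SmallCategory C01] [SmallCategory C0] [SmallCategory C1]
variable {Q : Type u} [SmallCategory Q]
variable {κ₀ : C01 ⥤ C0} {κ₁ : C01 ⥤ C1}
variable {j₀ : C0 ⥤ Q} {j₁ : C1 ⥤ Q}

/-- elementary zigzag relation on objects -/
def Rz (κ₀ : C01 ⥤ C0) (κ₁ : C01 ⥤ C1) : (C0 ⊕ C1) → (C0 ⊕ C1) → Prop :=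
  fun s t => ∃ c : C01, s = Sum.inl (κ₀.obj c) ∧ t = Sum.inr (κ₁.obj c)

/-- quotient of objects by the zigzag relation -/
def ZQuot (κ₀ : C01 ⥤ C0) (κ₁ : C01 ⥤ C1) : Type u := Quot (Rz κ₀ κ₁)

/-- left leg into the codiscrete category on the object quotient -/
def codisc₀ (κ₀ : C01 ⥤ C0) (κ₁ : C01 ⥤ C1) : C0 ⥤ Codisc (ZQuot κ₀ κ₁) where
  obj a := Quot.mk _ (Sum.inl a)
  map _ := PUnit.unit

/-- right leg into the codiscrete category on the object quotient -/
def codisc₁ (κ₀ : C01 ⥤ C0) (κ₁ : C01 ⥤ C1) : C1 ⥤ Codisc (ZQuot κ₀ κ₁) where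
  obj b := Quot.mk _ (Sum.inr b)
  map _ := PUnit.unit

theorem codisc_w (κ₀ : C01 ⥤ C0) (κ₁ : C01 ⥤ C1) :
    κ₀ ⋙ codisc₀ κ₀ κ₁ = κ₁ ⋙ codisc₁ κ₀ κ₁ := by
  apply CategoryTheory.Functor.ext
  · intro _ _ _
    exact Subsingleton.elim _ _
  · intro c
    exact Quot.sound ⟨c, rfl, rfl⟩

theorem zig
    (hpo : IsPushout (C := Cat.{u, u}) (Z := Cat.of C01) (X := Cat.of C0) (Y := Cat.of C1)
      (P := Cat.of Q) κ₀.toCatHom κ₁.toCatHom j₀.toCatHom j₁.toCatHom)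
    {s t : C0 ⊕ C1} (h : SrcObj j₀ j₁ s = SrcObj j₀ j₁ t) :
    Relation.EqvGen (Rz κ₀ κ₁) s t := by
  let D : Cat.of Q ⟶ Cat.of (Codisc (ZQuot κ₀ κ₁)) :=
    hpo.desc (codisc₀ κ₀ κ₁).toCatHom (codisc₁ κ₀ κ₁).toCatHom
      (congrArg Functor.toCatHom (codisc_w κ₀ κ₁))
  have h0 : j₀ ⋙ D.toFunctor = codisc₀ κ₀ κ₁ := congrArg Cat.Hom.toFunctor (hpo.inl_desc _ _ _)
  have h1 : j₁ ⋙ D.toFunctor = codisc₁ κ₀ κ₁ := congrArg Cat.Hom.toFunctor (hpo.inr_desc _ _ _)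
  have key : ∀ s : C0 ⊕ C1, D.toFunctor.obj (SrcObj j₀ j₁ s) = Quot.mk (Rz κ₀ κ₁) s := by
    rintro (a | b)
    · exact Functor.congr_obj h0 a
    · exact Functor.congr_obj h1 b
  have : Quot.mk (Rz κ₀ κ₁) s = Quot.mk (Rz κ₀ κ₁) t := by
    rw [← key s, ← key t]
    exact congrArg D.toFunctor.obj h
  exact Quot.eq.mp this

theorem zigEq {s t : C0 ⊕ C1} (hz : Relation.EqvGen (Rz κ₀ κ₁) s t)
    (w : κ₀ ⋙ j₀ = κ₁ ⋙ j₁) : SrcObj j₀ j₁ s = SrcObj j₀ j₁ t := by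
  induction hz with
  | rel s t hr => obtain ⟨c, rfl, rfl⟩ := hr; exact obEq w c
  | refl s => rfl
  | symm s t _ ih => exact ih.symm
  | trans s t u _ _ ih1 ih2 => exact ih1.trans ih2

variable {r₀ : C0 ⥤ C01} {r₁ : C1 ⥤ C01}

theorem transE [κ₀.Full] [κ₁.Full] (adj₀ : κ₀ ⊣ r₀) (adj₁ : κ₁ ⊣ r₁)
    (w : κ₀ ⋙ j₀ = κ₁ ⋙ j₁) {s t : C0 ⊕ C1}
    (hz : Relation.EqvGen (Rz κ₀ κ₁) s t) :
    ∀ (h : SrcObj j₀ j₁ s = SrcObj j₀ j₁ t),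
      CanForm adj₀ adj₁ w s t (eqToHom h) ∧ CanForm adj₀ adj₁ w t s (eqToHom h.symm) := by
  induction hz with
  | rel s t hr =>
    obtain ⟨c, rfl, rfl⟩ := hr
    intro h
    constructor
    · refine ⟨κ₀.map (adj₁.unit.app c), ?_⟩
      unfold ψLR
      rw [← Category.assoc, θ_nat w (adj₁.unit.app c), Category.assoc, ← j₁.map_comp,
        adj₁.left_triangle_components c]
      simp
      rfl
    · refine ⟨κ₁.map (adj₀.unit.app c), ?_⟩
      unfold ψRL
      rw [← Category.assoc, ← θ_nat' w (adj₀.unit.app c), Category.assoc, ← j₀.map_comp,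
        adj₀.left_triangle_components c]
      simp
      rfl
  | refl s =>
    intro h
    rcases s with a | b
    · exact ⟨⟨𝟙 a, by simp [SrcObj]; rfl⟩, ⟨𝟙 a, by simp [SrcObj]; rfl⟩⟩
    · exact ⟨⟨𝟙 b, by simp [SrcObj]; rfl⟩, ⟨𝟙 b, by simp [SrcObj]; rfl⟩⟩
  | symm s t _ ih =>
    intro h
    exact ⟨(ih h.symm).2, (ih h.symm).1⟩
  | trans s t u h1 h2 ih1 ih2 =>
    intro h
    have e1 : SrcObj j₀ j₁ s = SrcObj j₀ j₁ t := zigEq h1 w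
    have e2 : SrcObj j₀ j₁ t = SrcObj j₀ j₁ u := zigEq h2 w
    constructor
    · have := canComp adj₀ adj₁ w (ih1 e1).1 (ih2 e2).1
      rwa [eqToHom_trans] at this
    · have := canComp adj₀ adj₁ w (ih2 e2).2 (ih1 e1).2
      rwa [eqToHom_trans] at this

end Zig

end GluAux
namespace GluAux

section PPdef

variable {C01 C0 C1 : Type u} [SmallCategory C01] [SmallCategory C0] [SmallCategory C1]
variable {Q : Type u} [SmallCategory Q]
variable {κ₀ : C01 ⥤ C0} {κ₁ : C01 ⥤ C1}
variable {r₀ : C0 ⥤ C01} {r₁ : C1 ⥤ C01}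
variable {j₀ : C0 ⥤ Q} {j₁ : C1 ⥤ Q}

/-- a morphism of `Q` admits a canonical presentation -/
def PP (adj₀ : κ₀ ⊣ r₀) (adj₁ : κ₁ ⊣ r₁) (w : κ₀ ⋙ j₀ = κ₁ ⋙ j₁)
    {x y : Q} (φ : x ⟶ y) : Prop :=
  ∃ (s t : C0 ⊕ C1) (hs : SrcObj j₀ j₁ s = x) (ht : SrcObj j₀ j₁ t = y)
    (χ : SrcObj j₀ j₁ s ⟶ SrcObj j₀ j₁ t),
      CanForm adj₀ adj₁ w s t χ ∧ φ = eqToHom hs.symm ≫ χ ≫ eqToHom ht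

variable (adj₀ : κ₀ ⊣ r₀) (adj₁ : κ₁ ⊣ r₁) (w : κ₀ ⋙ j₀ = κ₁ ⋙ j₁)

theorem PP_id {x : Q} (hx : ∃ s, SrcObj j₀ j₁ s = x) : PP adj₀ adj₁ w (𝟙 x) := by
  obtain ⟨s, rfl⟩ := hx
  refine ⟨s, s, rfl, rfl, 𝟙 _, ?_, by simp⟩
  rcases s with a | b
  · exact ⟨𝟙 a, by simp [SrcObj]⟩
  · exact ⟨𝟙 b, by simp [SrcObj]⟩

theorem PP_j₀ {a a' : C0} (f : a ⟶ a') : PP adj₀ adj₁ w (j₀.map f) :=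
  ⟨Sum.inl a, Sum.inl a', rfl, rfl, j₀.map f, ⟨f, rfl⟩,
    by show j₀.map f = 𝟙 _ ≫ j₀.map f ≫ 𝟙 _; simp⟩

theorem PP_j₁ {b b' : C1} (g : b ⟶ b') : PP adj₀ adj₁ w (j₁.map g) :=
  ⟨Sum.inr b, Sum.inr b', rfl, rfl, j₁.map g, ⟨g, rfl⟩,
    by show j₁.map g = 𝟙 _ ≫ j₁.map g ≫ 𝟙 _; simp⟩

theorem PP_comp [κ₀.Full] [κ₁.Full]
    (hpo : IsPushout (C := Cat.{u, u}) (Z := Cat.of C01) (X := Cat.of C0) (Y := Cat.of C1)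
      (P := Cat.of Q) κ₀.toCatHom κ₁.toCatHom j₀.toCatHom j₁.toCatHom)
    {x y z : Q} {φ : x ⟶ y} {ψ : y ⟶ z}
    (h : PP adj₀ adj₁ w φ) (h' : PP adj₀ adj₁ w ψ) : PP adj₀ adj₁ w (φ ≫ ψ) := by
  obtain ⟨s, t, hs, ht, χ, hχ, rfl⟩ := h
  obtain ⟨t', u, ht', hu, χ', hχ', rfl⟩ := h'
  have hmid : SrcObj j₀ j₁ t = SrcObj j₀ j₁ t' := ht.trans ht'.symm
  have hcan : CanForm adj₀ adj₁ w t t' (eqToHom hmid) := (transE adj₀ adj₁ w (zig hpo hmid) hmid).1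
  refine ⟨s, u, hs, hu, χ ≫ eqToHom hmid ≫ χ', ?_, ?_⟩
  · exact canComp adj₀ adj₁ w hχ (canComp adj₀ adj₁ w hcan hχ')
  · simp [eqToHom_trans_assoc]

theorem PP_conj {x y x' y' : Q} {φ : x ⟶ y} {χ : x' ⟶ y'}
    (e : x = x') (e' : y' = y) (hχ : PP adj₀ adj₁ w χ)
    (hφ : φ = eqToHom e ≫ χ ≫ eqToHom e') : PP adj₀ adj₁ w φ := by
  obtain ⟨s, t, hs, ht, χ₀, h1, rfl⟩ := hχ
  exact ⟨s, t, hs.trans e.symm, ht.trans e', χ₀, h1, by simp [hφ]⟩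

end PPdef

/-- the subcategory of `Q` consisting of objects and morphisms which come from the two
legs of the pushout -/
structure VObj {C01 C0 C1 Q : Type u} [SmallCategory C01] [SmallCategory C0]
    [SmallCategory C1] [SmallCategory Q] {κ₀ : C01 ⥤ C0} {κ₁ : C01 ⥤ C1}
    {r₀ : C0 ⥤ C01} {r₁ : C1 ⥤ C01} {j₀ : C0 ⥤ Q} {j₁ : C1 ⥤ Q}
    (adj₀ : κ₀ ⊣ r₀) (adj₁ : κ₁ ⊣ r₁) (w : κ₀ ⋙ j₀ = κ₁ ⋙ j₁)
    (hpo : IsPushout (C := Cat.{u, u}) (Z := Cat.of C01) (X := Cat.of C0) (Y := Cat.of C1)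
      (P := Cat.of Q) κ₀.toCatHom κ₁.toCatHom j₀.toCatHom j₁.toCatHom) : Type u where
  pt : Q
  rep : ∃ s, SrcObj j₀ j₁ s = pt

section VCat

variable {C01 C0 C1 Q : Type u} [SmallCategory C01] [SmallCategory C0]
    [SmallCategory C1] [SmallCategory Q] {κ₀ : C01 ⥤ C0} {κ₁ : C01 ⥤ C1}
    [κ₀.Full] [κ₁.Full]
    {r₀ : C0 ⥤ C01} {r₁ : C1 ⥤ C01} {j₀ : C0 ⥤ Q} {j₁ : C1 ⥤ Q}
    (adj₀ : κ₀ ⊣ r₀) (adj₁ : κ₁ ⊣ r₁) (w : κ₀ ⋙ j₀ = κ₁ ⋙ j₁)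
    (hpo : IsPushout (C := Cat.{u, u}) (Z := Cat.of C01) (X := Cat.of C0) (Y := Cat.of C1)
      (P := Cat.of Q) κ₀.toCatHom κ₁.toCatHom j₀.toCatHom j₁.toCatHom)

instance : SmallCategory (VObj adj₀ adj₁ w hpo) where
  Hom v w' := {φ : v.pt ⟶ w'.pt // PP adj₀ adj₁ w φ}
  id v := ⟨𝟙 v.pt, PP_id adj₀ adj₁ w v.rep⟩
  comp f g := ⟨f.val ≫ g.val, PP_comp adj₀ adj₁ w hpo f.2 g.2⟩
  id_comp f := Subtype.ext (Category.id_comp f.val)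
  comp_id f := Subtype.ext (Category.comp_id f.val)
  assoc f g h := Subtype.ext (Category.assoc f.val g.val h.val)

theorem VObj.ext' {v v' : VObj adj₀ adj₁ w hpo} (h : v.pt = v'.pt) : v = v' := by
  cases v; cases v'; dsimp at h; subst h; rfl

theorem VObj.eqToHom_val {v v' : VObj adj₀ adj₁ w hpo} (h : v = v') :
    (eqToHom h).val = eqToHom (congrArg VObj.pt h) := by
  cases h; rfl

/-- left leg into the subcategory -/
def vLift₀ : C0 ⥤ VObj adj₀ adj₁ w hpo where
  obj a := ⟨j₀.obj a, ⟨Sum.inl a, rfl⟩⟩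
  map f := ⟨j₀.map f, PP_j₀ adj₀ adj₁ w f⟩
  map_id a := Subtype.ext (j₀.map_id a)
  map_comp f g := Subtype.ext (j₀.map_comp f g)

/-- right leg into the subcategory -/
def vLift₁ : C1 ⥤ VObj adj₀ adj₁ w hpo where
  obj b := ⟨j₁.obj b, ⟨Sum.inr b, rfl⟩⟩
  map g := ⟨j₁.map g, PP_j₁ adj₀ adj₁ w g⟩
  map_id b := Subtype.ext (j₁.map_id b)
  map_comp f g := Subtype.ext (j₁.map_comp f g)

/-- forgetting into Q -/
def vIncl : VObj adj₀ adj₁ w hpo ⥤ Q where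
  obj v := v.pt
  map f := f.val

@[simp] theorem v_comp_val {v1 v2 v3 : VObj adj₀ adj₁ w hpo} (f : v1 ⟶ v2) (g : v2 ⟶ v3) :
    (f ≫ g).val = f.val ≫ g.val := rfl

@[simp] theorem vLift₀_map_val {a a' : C0} (f : a ⟶ a') :
    ((vLift₀ adj₀ adj₁ w hpo).map f).val = j₀.map f := rfl

@[simp] theorem vLift₁_map_val {b b' : C1} (g : b ⟶ b') :
    ((vLift₁ adj₀ adj₁ w hpo).map g).val = j₁.map g := rfl

theorem v_w : κ₀ ⋙ vLift₀ adj₀ adj₁ w hpo = κ₁ ⋙ vLift₁ adj₀ adj₁ w hpo := by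
  apply CategoryTheory.Functor.ext
  · intro c c' u
    apply Subtype.ext
    have h := Functor.congr_hom w u
    simp only [Functor.comp_map] at h
    simp only [Functor.comp_map, v_comp_val, VObj.eqToHom_val, vLift₀_map_val, vLift₁_map_val]
    exact h
  · intro c
    exact VObj.ext' adj₀ adj₁ w hpo (obEq w c)

include hpo in
theorem allPP_allRep :
    (∀ x : Q, ∃ s, SrcObj j₀ j₁ s = x) ∧
      (∀ (x y : Q) (φ : x ⟶ y), PP adj₀ adj₁ w φ) := by
  let D : Cat.of Q ⟶ Cat.of (VObj adj₀ adj₁ w hpo) :=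
    hpo.desc (vLift₀ adj₀ adj₁ w hpo).toCatHom (vLift₁ adj₀ adj₁ w hpo).toCatHom
      (congrArg Functor.toCatHom (v_w adj₀ adj₁ w hpo))
  have h0 : j₀ ⋙ D.toFunctor = vLift₀ adj₀ adj₁ w hpo :=
    congrArg Cat.Hom.toFunctor (hpo.inl_desc _ _ _)
  have hincl : vLift₀ adj₀ adj₁ w hpo ⋙ vIncl adj₀ adj₁ w hpo = j₀ := rfl
  have hincl' : vLift₁ adj₀ adj₁ w hpo ⋙ vIncl adj₀ adj₁ w hpo = j₁ := rfl
  have E : D ≫ (vIncl adj₀ adj₁ w hpo).toCatHom = 𝟙 (Cat.of Q) := by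
    apply hpo.hom_ext
    · rw [← Category.assoc,
        show j₀.toCatHom ≫ D = (vLift₀ adj₀ adj₁ w hpo).toCatHom from hpo.inl_desc _ _ _]
      exact congrArg Functor.toCatHom (hincl.trans (Functor.comp_id j₀).symm)
    · rw [← Category.assoc,
        show j₁.toCatHom ≫ D = (vLift₁ adj₀ adj₁ w hpo).toCatHom from hpo.inr_desc _ _ _]
      exact congrArg Functor.toCatHom (hincl'.trans (Functor.comp_id j₁).symm)
  have EF : D.toFunctor ⋙ vIncl adj₀ adj₁ w hpo = 𝟭 Q := congrArg Cat.Hom.toFunctor E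
  constructor
  · intro x
    have hx := Functor.congr_obj EF x
    obtain ⟨s, hs⟩ := (D.toFunctor.obj x).rep
    exact ⟨s, hs.trans hx⟩
  · intro x y φ
    have hφ := Functor.congr_hom EF φ
    have hX := Functor.congr_obj EF x
    have hY := Functor.congr_obj EF y
    have hPP := (D.toFunctor.map φ).2
    refine PP_conj adj₀ adj₁ w hX.symm hY hPP ?_
    have hval : (D.toFunctor.map φ).val = eqToHom hX ≫ φ ≫ eqToHom hY.symm := by
      exact hφ
    rw [hval]
    simp

end VCat

end GluAux
namespace GluAux

section Fside

variable {C01 C0 C1 : Type u} [SmallCategory C01] [SmallCategory C0] [SmallCategory C1]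
variable {Q : Type u} [SmallCategory Q]
variable {κ₀ : C01 ⥤ C0} {κ₁ : C01 ⥤ C1}
variable [κ₀.Full] [κ₀.Faithful] [κ₁.Full] [κ₁.Faithful]
variable {r₀ : C0 ⥤ C01} {r₁ : C1 ⥤ C01}
variable {j₀ : C0 ⥤ Q} {j₁ : C1 ⥤ Q}
variable (adj₀ : κ₀ ⊣ r₀) (adj₁ : κ₁ ⊣ r₁) (w : κ₀ ⋙ j₀ = κ₁ ⋙ j₁)
variable (F : Q ⥤ PsPullback r₀ r₁)
variable (h₀ : j₀ ⋙ F ≅ iotaLeft r₀ adj₁) (h₁ : j₁ ⋙ F ≅ iotaRight adj₀ r₁)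

theorem iotaLeft_map_surj {a a' : C0}
    (g : (iotaLeft r₀ adj₁).obj a ⟶ (iotaLeft r₀ adj₁).obj a') :
    ∃ f : a ⟶ a', (iotaLeft r₀ adj₁).map f = g :=
  ⟨g.val.1, fromLeft_ext adj₁ rfl⟩

theorem iotaRight_map_surj {b b' : C1}
    (g : (iotaRight adj₀ r₁).obj b ⟶ (iotaRight adj₀ r₁).obj b') :
    ∃ f : b ⟶ b', (iotaRight adj₀ r₁).map f = g :=
  ⟨g.val.2, fromRight_ext adj₀ rfl⟩

/-- comparison isomorphism between the two composites, built from `h₀`, `h₁` and the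
commutativity of the square -/
noncomputable def mIso (c : C01) :
    (iotaLeft r₀ adj₁).obj (κ₀.obj c) ≅ (iotaRight adj₀ r₁).obj (κ₁.obj c) :=
  (h₀.app (κ₀.obj c)).symm ≪≫ F.mapIso (eqToIso (obEq w c)) ≪≫ h₁.app (κ₁.obj c)

theorem F_j₀ {a a' : C0} (f : a ⟶ a') :
    (h₀.app a).inv ≫ F.map (j₀.map f) ≫ (h₀.app a').hom =
      (iotaLeft r₀ adj₁).map f := by
  have h := h₀.hom.naturality f
  simp only [Functor.comp_map] at h
  simp only [Iso.app_hom, Iso.app_inv]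
  rw [h]
  simp

theorem F_j₁ {b b' : C1} (g : b ⟶ b') :
    (h₁.app b).inv ≫ F.map (j₁.map g) ≫ (h₁.app b').hom =
      (iotaRight adj₀ r₁).map g := by
  have h := h₁.hom.naturality g
  simp only [Functor.comp_map] at h
  simp only [Iso.app_hom, Iso.app_inv]
  rw [h]
  simp

theorem F_eqA (c : C01) :
    F.map (eqToHom (obEq w c)) =
      (h₀.app (κ₀.obj c)).hom ≫ (mIso adj₀ adj₁ w F h₀ h₁ c).hom ≫ (h₁.app (κ₁.obj c)).inv := by
  simp [mIso, Iso.app]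

theorem F_eqB (c : C01) :
    F.map (eqToHom (obEq w c).symm) =
      (h₁.app (κ₁.obj c)).hom ≫ (mIso adj₀ adj₁ w F h₀ h₁ c).inv ≫ (h₀.app (κ₀.obj c)).inv := by
  simp [mIso, Iso.app]

/-- the pseudo-pullback image of the canonical left-to-right morphisms -/
noncomputable def ΦLR (a : C0) (b : C1) (f : a ⟶ κ₀.obj (r₁.obj b)) :
    (iotaLeft r₀ adj₁).obj a ⟶ (iotaRight adj₀ r₁).obj b :=
  (iotaLeft r₀ adj₁).map f ≫ (mIso adj₀ adj₁ w F h₀ h₁ (r₁.obj b)).hom ≫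
    (iotaRight adj₀ r₁).map (adj₁.counit.app b)

/-- the pseudo-pullback image of the canonical right-to-left morphisms -/
noncomputable def ΦRL (b : C1) (a : C0) (p : b ⟶ κ₁.obj (r₀.obj a)) :
    (iotaRight adj₀ r₁).obj b ⟶ (iotaLeft r₀ adj₁).obj a :=
  (iotaRight adj₀ r₁).map p ≫ (mIso adj₀ adj₁ w F h₀ h₁ (r₀.obj a)).inv ≫
    (iotaLeft r₀ adj₁).map (adj₀.counit.app a)

theorem F_ψLR (a : C0) (b : C1) (f : a ⟶ κ₀.obj (r₁.obj b)) :
    (h₀.app a).inv ≫ F.map (ψLR adj₁ w a b f) ≫ (h₁.app b).hom =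
      ΦLR adj₀ adj₁ w F h₀ h₁ a b f := by
  have hn0 := h₀.hom.naturality f
  have hn1 := h₁.hom.naturality (adj₁.counit.app b)
  simp only [Functor.comp_map, Functor.id_obj, Functor.comp_obj] at hn0 hn1
  unfold ψLR ΦLR
  rw [F.map_comp, F.map_comp, F_eqA adj₀ adj₁ w F h₀ h₁ (r₁.obj b)]
  simp only [Iso.app_inv, Iso.app_hom, Category.assoc]
  slice_lhs 2 3 => rw [hn0]
  slice_lhs 6 7 => rw [hn1]
  simp

theorem F_ψRL (b : C1) (a : C0) (p : b ⟶ κ₁.obj (r₀.obj a)) :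
    (h₁.app b).inv ≫ F.map (ψRL adj₀ w b a p) ≫ (h₀.app a).hom =
      ΦRL adj₀ adj₁ w F h₀ h₁ b a p := by
  have hn1 := h₁.hom.naturality p
  have hn0 := h₀.hom.naturality (adj₀.counit.app a)
  simp only [Functor.comp_map, Functor.id_obj, Functor.comp_obj] at hn0 hn1
  unfold ψRL ΦRL
  rw [F.map_comp, F.map_comp, F_eqB adj₀ adj₁ w F h₀ h₁ (r₀.obj a)]
  simp only [Iso.app_inv, Iso.app_hom, Category.assoc]
  slice_lhs 2 3 => rw [hn1]
  slice_lhs 6 7 => rw [hn0]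
  simp

theorem ΦLR_fst (a : C0) (b : C1) (f : a ⟶ κ₀.obj (r₁.obj b)) :
    (ΦLR adj₀ adj₁ w F h₀ h₁ a b f).val.1 =
      f ≫ ((mIso adj₀ adj₁ w F h₀ h₁ (r₁.obj b)).hom.val.1 ≫
        κ₀.map (r₁.map (adj₁.counit.app b))) := by
  simp [ΦLR]
  rfl

theorem ΦRL_snd (b : C1) (a : C0) (p : b ⟶ κ₁.obj (r₀.obj a)) :
    (ΦRL adj₀ adj₁ w F h₀ h₁ b a p).val.2 =
      p ≫ ((mIso adj₀ adj₁ w F h₀ h₁ (r₀.obj a)).inv.val.2 ≫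
        κ₁.map (r₀.map (adj₀.counit.app a))) := by
  simp [ΦRL]
  rfl

theorem wIso_isIso (b : C1) :
    IsIso ((mIso adj₀ adj₁ w F h₀ h₁ (r₁.obj b)).hom.val.1 ≫
      κ₀.map (r₁.map (adj₁.counit.app b))) := by
  haveI i1 : IsIso ((mIso adj₀ adj₁ w F h₀ h₁ (r₁.obj b)).hom.val.1 : _) :=
    (inferInstance : IsIso ((isoFst (mIso adj₀ adj₁ w F h₀ h₁ (r₁.obj b))).hom))
  haveI i2 := isIso_r_map_counit adj₁ b
  exact IsIso.comp_isIso' i1 (Functor.map_isIso κ₀ _)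

theorem vIso_isIso (a : C0) :
    IsIso ((mIso adj₀ adj₁ w F h₀ h₁ (r₀.obj a)).inv.val.2 ≫
      κ₁.map (r₀.map (adj₀.counit.app a))) := by
  haveI i1 : IsIso ((mIso adj₀ adj₁ w F h₀ h₁ (r₀.obj a)).inv.val.2 : _) :=
    (inferInstance : IsIso ((isoSnd (mIso adj₀ adj₁ w F h₀ h₁ (r₀.obj a))).inv))
  haveI i2 := isIso_r_map_counit adj₀ a
  exact IsIso.comp_isIso' i1 (Functor.map_isIso κ₁ _)

theorem ΦLR_inj {a : C0} {b : C1} {f f' : a ⟶ κ₀.obj (r₁.obj b)}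
    (h : ΦLR adj₀ adj₁ w F h₀ h₁ a b f = ΦLR adj₀ adj₁ w F h₀ h₁ a b f') : f = f' := by
  haveI := wIso_isIso adj₀ adj₁ w F h₀ h₁ b
  have h2 := congrArg (fun q => q.val.1) h
  simp only [ΦLR_fst] at h2
  exact (@IsIso.mono_of_iso _ _ _ _ _ this).right_cancellation _ _ h2

theorem ΦLR_surj (a : C0) (b : C1)
    (g : (iotaLeft r₀ adj₁).obj a ⟶ (iotaRight adj₀ r₁).obj b) :
    ∃ f : a ⟶ κ₀.obj (r₁.obj b), ΦLR adj₀ adj₁ w F h₀ h₁ a b f = g := by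
  haveI := wIso_isIso adj₀ adj₁ w F h₀ h₁ b
  refine ⟨g.val.1 ≫ inv (I := this) ((mIso adj₀ adj₁ w F h₀ h₁ (r₁.obj b)).hom.val.1 ≫
    κ₀.map (r₁.map (adj₁.counit.app b))), fromLeft_ext adj₁ ?_⟩
  rw [ΦLR_fst]
  exact (Category.assoc _ _ _).trans
    ((congrArg (g.val.1 ≫ ·) (IsIso.inv_hom_id (I := this) _)).trans (Category.comp_id _))

theorem ΦRL_inj {b : C1} {a : C0} {p p' : b ⟶ κ₁.obj (r₀.obj a)}
    (h : ΦRL adj₀ adj₁ w F h₀ h₁ b a p = ΦRL adj₀ adj₁ w F h₀ h₁ b a p') : p = p' := by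
  haveI := vIso_isIso adj₀ adj₁ w F h₀ h₁ a
  have h2 := congrArg (fun q => q.val.2) h
  simp only [ΦRL_snd] at h2
  exact (@IsIso.mono_of_iso _ _ _ _ _ this).right_cancellation _ _ h2

theorem ΦRL_surj (b : C1) (a : C0)
    (g : (iotaRight adj₀ r₁).obj b ⟶ (iotaLeft r₀ adj₁).obj a) :
    ∃ p : b ⟶ κ₁.obj (r₀.obj a), ΦRL adj₀ adj₁ w F h₀ h₁ b a p = g := by
  haveI := vIso_isIso adj₀ adj₁ w F h₀ h₁ a
  refine ⟨g.val.2 ≫ inv (I := this) ((mIso adj₀ adj₁ w F h₀ h₁ (r₀.obj a)).inv.val.2 ≫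
    κ₁.map (r₀.map (adj₀.counit.app a))), fromRight_ext adj₀ ?_⟩
  rw [ΦRL_snd]
  exact (Category.assoc _ _ _).trans
    ((congrArg (g.val.2 ≫ ·) (IsIso.inv_hom_id (I := this) _)).trans (Category.comp_id _))

include h₀ h₁ in
theorem canInj {s t : C0 ⊕ C1} {χ χ' : SrcObj j₀ j₁ s ⟶ SrcObj j₀ j₁ t}
    (hc : CanForm adj₀ adj₁ w s t χ) (hc' : CanForm adj₀ adj₁ w s t χ')
    (hF : F.map χ = F.map χ') : χ = χ' := by
  rcases s with a | b <;> rcases t with a' | b' <;>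
    obtain ⟨f, rfl⟩ := hc <;> obtain ⟨f', rfl⟩ := hc'
  · have h2 : (iotaLeft r₀ adj₁).map f = (iotaLeft r₀ adj₁).map f' := by
      rw [← F_j₀ (adj₁ := adj₁) (F := F) (h₀ := h₀) f,
        ← F_j₀ (adj₁ := adj₁) (F := F) (h₀ := h₀) f']
      erw [hF]
      rfl
    have h3 := congrArg (fun q => q.val.1) h2
    simp only [iotaLeft_map_fst] at h3
    rw [h3]
  · have h2 : ΦLR adj₀ adj₁ w F h₀ h₁ a b' f = ΦLR adj₀ adj₁ w F h₀ h₁ a b' f' := by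
      rw [← F_ψLR adj₀ adj₁ w F h₀ h₁, ← F_ψLR adj₀ adj₁ w F h₀ h₁]
      erw [hF]
      rfl
    rw [ΦLR_inj adj₀ adj₁ w F h₀ h₁ h2]
  · have h2 : ΦRL adj₀ adj₁ w F h₀ h₁ b a' f = ΦRL adj₀ adj₁ w F h₀ h₁ b a' f' := by
      rw [← F_ψRL adj₀ adj₁ w F h₀ h₁, ← F_ψRL adj₀ adj₁ w F h₀ h₁]
      erw [hF]
      rfl
    rw [ΦRL_inj adj₀ adj₁ w F h₀ h₁ h2]
  · have h2 : (iotaRight adj₀ r₁).map f = (iotaRight adj₀ r₁).map f' := by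
      rw [← F_j₁ (adj₀ := adj₀) (F := F) (h₁ := h₁) f,
        ← F_j₁ (adj₀ := adj₀) (F := F) (h₁ := h₁) f']
      erw [hF]
      rfl
    have h3 := congrArg (fun q => q.val.2) h2
    simp only [iotaRight_map_snd] at h3
    rw [h3]

end Fside

end GluAux
/-- Let `κᵢ : C₀₁ → Cᵢ` (`i = 0,1`) be fully faithful functors admitting right adjoints
`rᵢ = ∂ᵢ : Cᵢ → C₀₁`. Then the canonical functor `ι` from the pushout `C₀ ⊔_{C₀₁} C₁` of
the `κᵢ` (here: any category `Q` exhibited as this pushout in `Cat`) to the pseudo-pullback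
`C₀ ×_{C₀₁} C₁` of the `rᵢ`, induced by `(id, κ₁ ∂₀)` on `C₀` and `(κ₀ ∂₁, id)` on `C₁`,
is fully faithful. -/
theorem pushout_to_pullback_fullyFaithful
    {Q : Type u} [SmallCategory Q]
    (κ₀ : C01 ⥤ C0) (κ₁ : C01 ⥤ C1)
    [κ₀.Full] [κ₀.Faithful] [κ₁.Full] [κ₁.Faithful]
    (r₀ : C0 ⥤ C01) (r₁ : C1 ⥤ C01) (adj₀ : κ₀ ⊣ r₀) (adj₁ : κ₁ ⊣ r₁)
    (j₀ : C0 ⥤ Q) (j₁ : C1 ⥤ Q)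
    (hpo : IsPushout (C := Cat.{u, u}) (Z := Cat.of C01) (X := Cat.of C0) (Y := Cat.of C1)
      (P := Cat.of Q) κ₀.toCatHom κ₁.toCatHom j₀.toCatHom j₁.toCatHom)
    (F : Q ⥤ PsPullback r₀ r₁)
    (h₀ : j₀ ⋙ F ≅ iotaLeft r₀ adj₁) (h₁ : j₁ ⋙ F ≅ iotaRight adj₀ r₁) :
    F.Full ∧ F.Faithful := by
  have w : κ₀ ⋙ j₀ = κ₁ ⋙ j₁ := congrArg Cat.Hom.toFunctor hpo.w
  obtain ⟨allRep, allPP⟩ := GluAux.allPP_allRep adj₀ adj₁ w hpo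
  constructor
  · refine ⟨fun {x y} g => ?_⟩
    obtain ⟨s, hs⟩ := allRep x
    obtain ⟨t, ht⟩ := allRep y
    subst hs; subst ht
    rcases s with a | b <;> rcases t with a' | b'
    · obtain ⟨f, hf⟩ := GluAux.iotaLeft_map_surj (adj₁ := adj₁)
        ((h₀.app a).inv ≫ g ≫ (h₀.app a').hom)
      have hc := GluAux.F_j₀ (adj₁ := adj₁) (F := F) (h₀ := h₀) f
      rw [hf] at hc
      exact ⟨j₀.map f,
        (cancel_mono ((h₀.app a').hom)).mp ((cancel_epi ((h₀.app a).inv)).mp hc)⟩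
    · obtain ⟨f, hf⟩ := GluAux.ΦLR_surj adj₀ adj₁ w F h₀ h₁ a b'
        ((h₀.app a).inv ≫ g ≫ (h₁.app b').hom)
      have hc := GluAux.F_ψLR adj₀ adj₁ w F h₀ h₁ a b' f
      rw [hf] at hc
      exact ⟨GluAux.ψLR adj₁ w a b' f,
        (cancel_mono ((h₁.app b').hom)).mp ((cancel_epi ((h₀.app a).inv)).mp hc)⟩
    · obtain ⟨p, hp⟩ := GluAux.ΦRL_surj adj₀ adj₁ w F h₀ h₁ b a'
        ((h₁.app b).inv ≫ g ≫ (h₀.app a').hom)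
      have hc := GluAux.F_ψRL adj₀ adj₁ w F h₀ h₁ b a' p
      rw [hp] at hc
      exact ⟨GluAux.ψRL adj₀ w b a' p,
        (cancel_mono ((h₀.app a').hom)).mp ((cancel_epi ((h₁.app b).inv)).mp hc)⟩
    · obtain ⟨f, hf⟩ := GluAux.iotaRight_map_surj (adj₀ := adj₀)
        ((h₁.app b).inv ≫ g ≫ (h₁.app b').hom)
      have hc := GluAux.F_j₁ (adj₀ := adj₀) (F := F) (h₁ := h₁) f
      rw [hf] at hc
      exact ⟨j₁.map f,
        (cancel_mono ((h₁.app b').hom)).mp ((cancel_epi ((h₁.app b).inv)).mp hc)⟩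
  · refine ⟨fun {x y} {φ ψ} hFeq => ?_⟩
    obtain ⟨s, t, hs, ht, χ, hχ, hφ⟩ := allPP x y φ
    obtain ⟨s', t', hs', ht', χ', hχ', hψ⟩ := allPP x y ψ
    have h1 : GluAux.SrcObj j₀ j₁ s = GluAux.SrcObj j₀ j₁ s' := hs.trans hs'.symm
    have h2 : GluAux.SrcObj j₀ j₁ t' = GluAux.SrcObj j₀ j₁ t := ht'.trans ht.symm
    have hc'' : GluAux.CanForm adj₀ adj₁ w s t (eqToHom h1 ≫ χ' ≫ eqToHom h2) :=
      GluAux.canComp adj₀ adj₁ w (GluAux.transE adj₀ adj₁ w (GluAux.zig hpo h1) h1).1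
        (GluAux.canComp adj₀ adj₁ w hχ' (GluAux.transE adj₀ adj₁ w (GluAux.zig hpo h2) h2).1)
    have hχeq : χ = eqToHom hs ≫ φ ≫ eqToHom ht.symm := by rw [hφ]; simp
    have hχ2eq : eqToHom h1 ≫ χ' ≫ eqToHom h2 = eqToHom hs ≫ ψ ≫ eqToHom ht.symm := by
      rw [hψ]; simp
    have key : F.map χ = F.map (eqToHom h1 ≫ χ' ≫ eqToHom h2) := by
      rw [hχeq, hχ2eq]
      simp only [Functor.map_comp]
      rw [hFeq]
    have hfin := GluAux.canInj adj₀ adj₁ w F h₀ h₁ hχ hc'' key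
    rw [hφ, hψ, hfin]
    simp
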